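/- Let {z_{ta}} be vectors in R^d with ‖z_{ta}‖₂ ≤ X, each S_t a finite set with |S_t| ≤ K, and Λ_t := λI_d + Σ_{s=1}^{t-1} Σ_{a∈S_s} z_{sa} z_{sa}ᵀ with λ > 0. Let T₀ ⊆ [T] be the set of rounds t where Σ_{a∈S_t} ‖z_{ta}‖²_{Λ_t⁻¹} ≥ L for some L > 0. Then |T₀| ≤ (2d / log(1+L)) · log(1 + X²K / (log(1+L) λ)). -/

import Mathlib

open Matrix Finset Real

variable {d : ℕ}

lemma psd_vecMulVec (v : Fin d → ℝ) : (vecMulVec v v).PosSemidef := by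
  have h : vecMulVec v v = (Matrix.replicateRow Unit v)ᴴ * (Matrix.replicateRow Unit v) := by
    rw [vecMulVec_eq Unit]
    congr 1
  rw [h]
  exact posSemidef_conjTranspose_mul_self _

lemma psd_quad {M : Matrix (Fin d) (Fin d) ℝ} (hM : M.PosSemidef) (x : Fin d → ℝ) :
    0 ≤ x ⬝ᵥ M *ᵥ x := by
  simpa using hM.dotProduct_mulVec_nonneg x

lemma pd_quad {M : Matrix (Fin d) (Fin d) ℝ} (hM : M.PosDef) {x : Fin d → ℝ} (hx : x ≠ 0) :
    0 < x ⬝ᵥ M *ᵥ x := by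
  simpa using hM.dotProduct_mulVec_pos hx

lemma herm_dot_shift {M : Matrix (Fin d) (Fin d) ℝ} (hM : M.IsHermitian)
    (x y : Fin d → ℝ) : x ⬝ᵥ M *ᵥ y = (M *ᵥ x) ⬝ᵥ y := by
  rw [Matrix.dotProduct_mulVec, ← Matrix.mulVec_transpose]
  congr 1
  rw [show Mᵀ = M from by rw [← Matrix.conjTranspose_eq_transpose_of_trivial]; exact hM]

open scoped MatrixOrder in
lemma psd_cauchy_schwarz {M : Matrix (Fin d) (Fin d) ℝ} (hM : M.PosSemidef)
    (x y : Fin d → ℝ) :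
    (x ⬝ᵥ M *ᵥ y) ^ 2 ≤ (x ⬝ᵥ M *ᵥ x) * (y ⬝ᵥ M *ᵥ y) := by
  obtain ⟨B, hB⟩ : ∃ B : Matrix (Fin d) (Fin d) ℝ, M = Bᴴ * B :=
    ⟨CFC.sqrt M, by rw [(Matrix.nonneg_iff_posSemidef.mp (CFC.sqrt_nonneg M)).isHermitian.eq,
      CFC.sqrt_mul_sqrt_self M (Matrix.nonneg_iff_posSemidef.mpr hM)]⟩
  subst hB
  have hBt : Bᴴ = Bᵀ := by ext i j; simp [Matrix.conjTranspose_apply]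
  have key : ∀ u v : Fin d → ℝ, u ⬝ᵥ (Bᴴ * B) *ᵥ v = (B *ᵥ u) ⬝ᵥ (B *ᵥ v) := by
    intro u v
    rw [← Matrix.mulVec_mulVec, Matrix.dotProduct_mulVec, hBt, Matrix.vecMul_transpose]
  rw [key, key, key]
  simpa [dotProduct, pow_two] using
    Finset.sum_mul_sq_le_sq_mul_sq Finset.univ (B *ᵥ x) (B *ᵥ y)

lemma inv_quad_mono {A B : Matrix (Fin d) (Fin d) ℝ} (hA : A.PosDef) (hB : B.PosDef)
    (hAB : (B - A).PosSemidef) (x : Fin d → ℝ) :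
    x ⬝ᵥ B⁻¹ *ᵥ x ≤ x ⬝ᵥ A⁻¹ *ᵥ x := by
  have hBinv := hB.inv
  have hAinv := hA.inv
  set u : Fin d → ℝ := B⁻¹ *ᵥ x with hu
  set y : Fin d → ℝ := A⁻¹ *ᵥ x with hy
  have hxB : B *ᵥ u = x := by
    rw [hu, Matrix.mulVec_mulVec, Matrix.mul_nonsing_inv _ hB.det_pos.ne'.isUnit,
      Matrix.one_mulVec]
  have hxA : A *ᵥ y = x := by
    rw [hy, Matrix.mulVec_mulVec, Matrix.mul_nonsing_inv _ hA.det_pos.ne'.isUnit,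
      Matrix.one_mulVec]
  set q : ℝ := x ⬝ᵥ B⁻¹ *ᵥ x with hq
  have hq1 : u ⬝ᵥ B *ᵥ u = q := by
    rw [hxB, hq, ← hu, dotProduct_comm]
  have hq2 : q = u ⬝ᵥ x := by rw [hq, ← hu, dotProduct_comm]
  have hcs : (u ⬝ᵥ A *ᵥ y) ^ 2 ≤ (u ⬝ᵥ A *ᵥ u) * (y ⬝ᵥ A *ᵥ y) :=
    psd_cauchy_schwarz hA.posSemidef u y
  have hyAy : y ⬝ᵥ A *ᵥ y = x ⬝ᵥ A⁻¹ *ᵥ x := by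
    rw [hxA, herm_dot_shift hAinv.isHermitian, ← hy]
  have huAu : u ⬝ᵥ A *ᵥ u ≤ q := by
    rw [← hq1]
    have := psd_quad hAB u
    rw [Matrix.sub_mulVec, dotProduct_sub] at this
    linarith
  have hq0 : 0 ≤ q := psd_quad hBinv.posSemidef x
  have huAu0 : 0 ≤ u ⬝ᵥ A *ᵥ u := psd_quad hA.posSemidef u
  have hyAy0 : 0 ≤ y ⬝ᵥ A *ᵥ y := psd_quad hA.posSemidef y
  have hk : q ^ 2 ≤ q * (x ⬝ᵥ A⁻¹ *ᵥ x) := by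
    calc q ^ 2 = (u ⬝ᵥ A *ᵥ y) ^ 2 := by rw [hxA, ← hq2]

    _ ≤ (u ⬝ᵥ A *ᵥ u) * (y ⬝ᵥ A *ᵥ y) := hcs
    _ ≤ q * (x ⬝ᵥ A⁻¹ *ᵥ x) := by rw [← hyAy]; exact mul_le_mul_of_nonneg_right huAu hyAy0
  rcases eq_or_lt_of_le hq0 with h0 | h0
  · rw [← h0]; rw [hyAy] at hyAy0; exact hyAy0
  · nlinarith [hk]

lemma one_add_sum_le_prod {ι : Type*} (s : Finset ι) (f : ι → ℝ) (hf : ∀ i ∈ s, 0 ≤ f i) :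
    1 + ∑ i ∈ s, f i ≤ ∏ i ∈ s, (1 + f i) := by
  classical
  induction s using Finset.induction_on with
  | empty => simp
  | insert _ _ ha ih =>
    rename_i a s
    rw [Finset.sum_insert ha, Finset.prod_insert ha]
    have h1 : ∀ i ∈ s, 0 ≤ f i := fun i hi => hf i (Finset.mem_insert_of_mem hi)
    have h2 := ih h1
    have h3 : 0 ≤ f a := hf a (Finset.mem_insert_self a s)
    have h4 : 0 ≤ ∑ i ∈ s, f i := Finset.sum_nonneg h1
    nlinarith

lemma trace_eq_sum_eigs {M : Matrix (Fin d) (Fin d) ℝ} (hM : M.IsHermitian) :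
    M.trace = ∑ i, hM.eigenvalues i := by
  conv_lhs => rw [hM.spectral_theorem, Unitary.conjStarAlgAut_apply]
  rw [Matrix.trace_mul_cycle]
  rw [show (star hM.eigenvectorUnitary : Matrix (Fin d) (Fin d) ℝ) *
      (hM.eigenvectorUnitary : Matrix (Fin d) (Fin d) ℝ) = 1 from
    (Matrix.mem_unitaryGroup_iff').mp hM.eigenvectorUnitary.2, Matrix.one_mul,
    Matrix.trace_diagonal]
  simp

lemma det_one_add_psd {M : Matrix (Fin d) (Fin d) ℝ} (hM : M.PosSemidef) :
    1 + M.trace ≤ (1 + M).det := by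
  have hH := hM.isHermitian
  have hdet : (1 + M).det = ∏ i, (1 + hH.eigenvalues i) := by
    conv_lhs => rw [show (1 : Matrix (Fin d) (Fin d) ℝ) + M =
      (hH.eigenvectorUnitary : Matrix (Fin d) (Fin d) ℝ) *
        (1 + Matrix.diagonal (RCLike.ofReal ∘ hH.eigenvalues)) *
        (star hH.eigenvectorUnitary : Matrix (Fin d) (Fin d) ℝ) from by
      rw [Matrix.mul_add, Matrix.add_mul, Matrix.mul_one,
        (Matrix.mem_unitaryGroup_iff).mp hH.eigenvectorUnitary.2]
      congr 1
      conv_lhs => rw [hH.spectral_theorem, Unitary.conjStarAlgAut_apply]]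
    rw [Matrix.det_mul, Matrix.det_mul, mul_comm, ← mul_assoc, ← Matrix.det_mul,
      (Matrix.mem_unitaryGroup_iff').mp hH.eigenvectorUnitary.2, Matrix.det_one, one_mul]
    rw [show (1 : Matrix (Fin d) (Fin d) ℝ) = Matrix.diagonal (fun _ => 1) from
      (Matrix.diagonal_one).symm, Matrix.diagonal_add, Matrix.det_diagonal]
    simp [Pi.add_def]
  rw [hdet, trace_eq_sum_eigs hH]
  exact one_add_sum_le_prod _ _ (fun i _ => hM.eigenvalues_nonneg i)

open scoped MatrixOrder in
lemma det_add_psd_lower {V A : Matrix (Fin d) (Fin d) ℝ} (hV : V.PosDef)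
    (hA : A.PosSemidef) :
    V.det * (1 + (V⁻¹ * A).trace) ≤ (V + A).det := by
  have hVs := hV.posSemidef
  set B := CFC.sqrt V with hB
  have hBpsd : B.PosSemidef := Matrix.nonneg_iff_posSemidef.mp (CFC.sqrt_nonneg V)
  have hBB : B * B = V := CFC.sqrt_mul_sqrt_self V (Matrix.nonneg_iff_posSemidef.mpr hVs)
  have hdetB : B.det * B.det = V.det := by rw [← Matrix.det_mul, hBB]
  have hdB : IsUnit B.det := by
    refine isUnit_iff_ne_zero.mpr (fun h => ?_)
    rw [h, mul_zero] at hdetB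
    exact hV.det_pos.ne' hdetB.symm
  have hBH : B⁻¹ᴴ = B⁻¹ := by
    rw [Matrix.conjTranspose_nonsing_inv, hBpsd.isHermitian]
  set M := B⁻¹ * A * B⁻¹ with hM
  have hMpsd : M.PosSemidef := by
    have := hA.conjTranspose_mul_mul_same (B := B⁻¹)
    rwa [hBH] at this
  have hsplit : V + A = B * (1 + M) * B := by
    rw [Matrix.mul_add, Matrix.add_mul, Matrix.mul_one, hBB, hM]
    congr 1
    rw [← Matrix.mul_assoc, ← Matrix.mul_assoc, Matrix.mul_nonsing_inv _ hdB,
      Matrix.one_mul, Matrix.mul_assoc, Matrix.nonsing_inv_mul _ hdB, Matrix.mul_one]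
  have htr : M.trace = (V⁻¹ * A).trace := by
    rw [hM, Matrix.trace_mul_cycle, ← Matrix.mul_inv_rev, hBB]
  calc V.det * (1 + (V⁻¹ * A).trace) = V.det * (1 + M.trace) := by rw [htr]
    _ ≤ V.det * (1 + M).det :=
        mul_le_mul_of_nonneg_left (det_one_add_psd hMpsd) hV.det_pos.le
    _ = (V + A).det := by
        rw [hsplit, Matrix.det_mul, Matrix.det_mul, ← hdetB]; ring

lemma det_le_trace_pow (hd : 0 < d) {V : Matrix (Fin d) (Fin d) ℝ} (hV : V.PosDef) :
    V.det ≤ (V.trace / d) ^ d := by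
  have hH := hV.isHermitian
  have hdet : V.det = ∏ i, hH.eigenvalues i := by
    have := hH.det_eq_prod_eigenvalues
    simpa using this
  have hpos : ∀ i, 0 < hH.eigenvalues i := hV.eigenvalues_pos
  have hgm := Real.geom_mean_le_arith_mean_weighted Finset.univ
    (fun _ : Fin d => (d : ℝ)⁻¹) hH.eigenvalues
    (fun i _ => by positivity)
    (by simp [Finset.card_univ]; field_simp)
    (fun i _ => (hpos i).le)
  have htr : V.trace = ∑ i, hH.eigenvalues i := trace_eq_sum_eigs hH
  have key : (∏ i, hH.eigenvalues i ^ ((d : ℝ)⁻¹)) ^ (d : ℕ) = ∏ i, hH.eigenvalues i := by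
    rw [← Finset.prod_pow]
    refine Finset.prod_congr rfl (fun i _ => ?_)
    rw [← Real.rpow_natCast (hH.eigenvalues i ^ ((d:ℝ)⁻¹)) d, ← Real.rpow_mul (hpos i).le]
    rw [inv_mul_cancel₀ (by exact_mod_cast hd.ne')]
    exact Real.rpow_one _
  have h1 : (0:ℝ) ≤ ∏ i, hH.eigenvalues i ^ ((d : ℝ)⁻¹) :=
    Finset.prod_nonneg (fun i _ => Real.rpow_nonneg (hpos i).le _)
  calc V.det = (∏ i, hH.eigenvalues i ^ ((d : ℝ)⁻¹)) ^ (d : ℕ) := by rw [key, hdet]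
    _ ≤ (∑ i, (d:ℝ)⁻¹ * hH.eigenvalues i) ^ (d : ℕ) := pow_le_pow_left₀ h1 hgm d
    _ = (V.trace / d) ^ d := by
        rw [htr, ← Finset.mul_sum]
        congr 1
        ring

lemma trace_vecMulVec (v : Fin d → ℝ) : (vecMulVec v v).trace = v ⬝ᵥ v := by
  simp [Matrix.trace, Matrix.diag, vecMulVec_apply, dotProduct]

lemma trace_inv_vecMulVec (V : Matrix (Fin d) (Fin d) ℝ) (v : Fin d → ℝ) :
    (V * vecMulVec v v).trace = v ⬝ᵥ V *ᵥ v := by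
  simp only [Matrix.trace, Matrix.diag, Matrix.mul_apply, vecMulVec_apply, dotProduct,
    Matrix.mulVec, Finset.mul_sum]
  refine Finset.sum_congr rfl (fun i _ => Finset.sum_congr rfl (fun j _ => by ring))

lemma posDef_smul_one {lam : ℝ} (hlam : 0 < lam) :
    (lam • (1 : Matrix (Fin d) (Fin d) ℝ)).PosDef := by
  have : lam • (1 : Matrix (Fin d) (Fin d) ℝ) = Matrix.diagonal (fun _ => lam) := by
    ext i j
    by_cases h : i = j <;> simp [Matrix.one_apply, Matrix.diagonal, h]
  rw [this]
  exact Matrix.posDef_diagonal_iff.mpr (fun _ => hlam)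

lemma inv_smul_one {lam : ℝ} (hlam : 0 < lam) :
    (lam • (1 : Matrix (Fin d) (Fin d) ℝ))⁻¹ = lam⁻¹ • 1 := by
  refine Matrix.inv_eq_left_inv ?_
  rw [Matrix.smul_mul, Matrix.mul_smul, smul_smul, Matrix.one_mul,
    inv_mul_cancel₀ hlam.ne', one_smul]

lemma log_one_add_le (x : ℝ) (hx : 0 ≤ x) : Real.log (1 + x) ≤ x / 2 + Real.log 2 := by
  have h2 : (1 + x) = 2 * ((1 + x) / 2) := by ring
  rw [h2, Real.log_mul (by norm_num) (by linarith), add_comm]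
  have := Real.log_le_sub_one_of_pos (show (0:ℝ) < (1 + x)/2 by linarith)
  linarith

lemma log_concave_bound {b x : ℝ} (hb0 : 0 ≤ b) (hb1 : b ≤ 1) (hx : 0 ≤ x) :
    b * Real.log (1 + x) ≤ Real.log (1 + b * x) := by
  have hcon := strictConcaveOn_log_Ioi.concaveOn
  have h := hcon.2 (Set.mem_Ioi.mpr one_pos) (Set.mem_Ioi.mpr (show (0:ℝ) < 1 + x by linarith))
    (sub_nonneg.mpr hb1) hb0 (by ring)
  simp only [smul_eq_mul, Real.log_one, mul_zero, zero_add] at h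
  calc b * Real.log (1 + x) ≤ Real.log ((1 - b) * 1 + b * (1 + x)) := by linarith
    _ = Real.log (1 + b * x) := by ring_nf

lemma scalar_final {d' l c N : ℝ} (hd : 0 < d') (hl : 0 < l) (hc : 0 < c) (hN : 0 ≤ N)
    (h : N * l ≤ d' * Real.log (1 + N * c / d')) :
    N ≤ 2 * d' / l * Real.log (1 + c / l) := by
  set u : ℝ := c / l with hu
  have hu0 : 0 < u := div_pos hc hl
  have hlog_u : 0 < Real.log (1 + u) := Real.log_pos (by linarith)
  set N₀ : ℝ := 2 * d' / l * Real.log (1 + u) with hN₀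
  have hN₀pos : 0 < N₀ := by positivity
  by_contra hcon
  push_neg at hcon
  -- hcon : N₀ < N
  have hNpos : 0 < N := lt_trans hN₀pos hcon
  set b : ℝ := N₀ / N with hb
  have hb0 : 0 ≤ b := by positivity
  have hb1 : b ≤ 1 := by
    rw [hb, div_le_one hNpos]; exact hcon.le
  have hbN : b * N = N₀ := by rw [hb]; field_simp
  have harg : 0 ≤ N * c / d' := by positivity
  have step1 : b * Real.log (1 + N * c / d') ≤ Real.log (1 + N₀ * c / d') := by
    have := log_concave_bound hb0 hb1 harg
    rw [show b * (N * c / d') = N₀ * c / d' from by rw [← hbN]; ring] at this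
    exact this
  have step2 : N₀ * l ≤ d' * Real.log (1 + N₀ * c / d') := by
    have h' : b * (N * l) ≤ b * (d' * Real.log (1 + N * c / d')) :=
      mul_le_mul_of_nonneg_left h hb0
    calc N₀ * l = b * (N * l) := by rw [← hbN]; ring
      _ ≤ b * (d' * Real.log (1 + N * c / d')) := h'
      _ = d' * (b * Real.log (1 + N * c / d')) := by ring
      _ ≤ d' * Real.log (1 + N₀ * c / d') := mul_le_mul_of_nonneg_left step1 hd.le
  -- now derive contradiction : N₀ * l > d' * log (1 + N₀ * c / d')
  have hkey : N₀ * c / d' = 2 * u * Real.log (1 + u) := by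
    rw [hN₀, hu]; field_simp
  have hlt : 1 + 2 * u * Real.log (1 + u) < (1 + u) ^ 2 := by
    have := log_one_add_le u hu0.le
    have hlog2 : Real.log 2 < 1 := by
      have := Real.log_two_lt_d9
      linarith
    nlinarith
  have hfinal : d' * Real.log (1 + N₀ * c / d') < N₀ * l := by
    rw [hkey]
    have hpos1 : (0:ℝ) < 1 + 2 * u * Real.log (1 + u) := by positivity
    have hloglt : Real.log (1 + 2 * u * Real.log (1 + u)) < 2 * Real.log (1 + u) := by
      rw [show 2 * Real.log (1 + u) = Real.log ((1 + u) ^ 2) from by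
        rw [Real.log_pow]; push_cast; ring]
      exact Real.log_lt_log hpos1 hlt
    have hNl : N₀ * l = d' * (2 * Real.log (1 + u)) := by
      rw [hN₀]; field_simp
    rw [hNl]
    exact mul_lt_mul_of_pos_left hloglt hd
  linarith

lemma psd_trace_nonneg {M : Matrix (Fin d) (Fin d) ℝ} (hM : M.PosSemidef) :
    0 ≤ M.trace := by
  rw [trace_eq_sum_eigs hM.isHermitian]
  exact Finset.sum_nonneg (fun i _ => hM.eigenvalues_nonneg i)

/-- Elliptical potential count lemma for assortments. -/
theorem stmt_1 (d T K : ℕ) (hd : 0 < d) (X lam L : ℝ) (hlam : 0 < lam) (hL : 0 < L)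
    (S : ℕ → Finset ℕ) (hK : ∀ t, (S t).card ≤ K)
    (z : ℕ → ℕ → Fin d → ℝ)
    (hz : ∀ t a, a ∈ S t → Real.sqrt (z t a ⬝ᵥ z t a) ≤ X)
    (Λ : ℕ → Matrix (Fin d) (Fin d) ℝ)
    (hΛ : ∀ t, Λ t = lam • (1 : Matrix (Fin d) (Fin d) ℝ) +
      ∑ s ∈ Finset.Icc 1 (t - 1), ∑ a ∈ S s, vecMulVec (z s a) (z s a))
    (T₀ : Finset ℕ)
    (hT₀ : ∀ t, t ∈ T₀ ↔ t ∈ Finset.Icc 1 T ∧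
      L ≤ ∑ a ∈ S t, z t a ⬝ᵥ ((Λ t)⁻¹ *ᵥ z t a)) :
    (T₀.card : ℝ) ≤ 2 * d / Real.log (1 + L) *
      Real.log (1 + X ^ 2 * K / (Real.log (1 + L) * lam)) := by
  classical
  have hL1 : 0 < Real.log (1 + L) := Real.log_pos (by linarith)
  set n := T₀.card with hn
  -- handle empty case
  rcases Nat.eq_zero_or_pos n with hn0 | hnpos
  · rw [hn0]
    push_cast
    apply mul_nonneg
    · positivity
    · apply Real.log_nonneg
      have : 0 ≤ X ^ 2 * K / (Real.log (1 + L) * lam) := by positivity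
      linarith
  -- enumeration of T₀
  have hcard : T₀.card = n := rfl
  set t : ℕ → ℕ := fun j => if h : j < n then T₀.orderEmbOfFin hcard ⟨j, h⟩ else 0 with ht
  have htmem : ∀ j, j < n → t j ∈ T₀ := by
    intro j hj
    simp only [ht, dif_pos hj]
    exact Finset.orderEmbOfFin_mem T₀ hcard ⟨j, hj⟩
  have htmono : ∀ j k, j < k → k < n → t j < t k := by
    intro j k hjk hk
    have hj : j < n := lt_trans hjk hk
    simp only [ht, dif_pos hj, dif_pos hk]
    exact (T₀.orderEmbOfFin hcard).strictMono (show (⟨j, hj⟩ : Fin n) < ⟨k, hk⟩ from hjk)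
  -- bound on individual vectors
  have hzz : ∀ s a, a ∈ S s → z s a ⬝ᵥ z s a ≤ X ^ 2 := by
    intro s a ha
    have h0 : 0 ≤ z s a ⬝ᵥ z s a := by
      simpa [dotProduct] using Finset.sum_nonneg (fun i _ => mul_self_nonneg (z s a i))
    have h1 := hz s a ha
    have h2 : 0 ≤ Real.sqrt (z s a ⬝ᵥ z s a) := Real.sqrt_nonneg _
    nlinarith [Real.sq_sqrt h0]
  have hX2 : 0 ≤ X ^ 2 := sq_nonneg X
  -- A s
  set A : ℕ → Matrix (Fin d) (Fin d) ℝ :=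
    fun s => ∑ a ∈ S s, vecMulVec (z s a) (z s a) with hA
  have hApsd : ∀ s, (A s).PosSemidef := by
    intro s
    exact Finset.sum_induction _ _ (fun a b ha hb => ha.add hb) Matrix.PosSemidef.zero
      (fun a _ => psd_vecMulVec _)
  have hsum_psd : ∀ (F : Finset ℕ), (∑ s ∈ F, A s).PosSemidef := by
    intro F
    exact Finset.sum_induction _ _ (fun a b ha hb => ha.add hb) Matrix.PosSemidef.zero
      (fun a _ => hApsd a)
  -- W
  set W : ℕ → Matrix (Fin d) (Fin d) ℝ :=
    fun k => lam • (1 : Matrix (Fin d) (Fin d) ℝ) + ∑ j ∈ Finset.range k, A (t j) with hW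
  have hWpd : ∀ k, (W k).PosDef := by
    intro k
    exact (posDef_smul_one hlam).add_posSemidef
      (Finset.sum_induction _ _ (fun a b ha hb => ha.add hb) Matrix.PosSemidef.zero
        (fun a _ => hApsd _))
  have hΛpd : ∀ s, (Λ s).PosDef := by
    intro s
    rw [hΛ s]
    exact (posDef_smul_one hlam).add_posSemidef (hsum_psd _)
  -- W k ≤ Λ (t k)
  have hWsub : ∀ k, k < n → ((Λ (t k)) - W k).PosSemidef := by
    intro k hk
    have hinj : Set.InjOn t (Finset.range k) := by
      intro a ha b hb hab
      simp only [Finset.coe_range, Set.mem_Iio] at ha hb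
      rcases lt_trichotomy a b with h | h | h
      · exact absurd hab (htmono a b h (lt_trans hb hk)).ne
      · exact h
      · exact absurd hab.symm (htmono b a h (lt_trans ha hk)).ne
    have himg : Finset.image t (Finset.range k) ⊆ Finset.Icc 1 (t k - 1) := by
      intro s hs
      rw [Finset.mem_image] at hs
      obtain ⟨j, hj, rfl⟩ := hs
      rw [Finset.mem_range] at hj
      have hjn : j < n := lt_trans hj hk
      have hmem := htmem j hjn
      rw [hT₀] at hmem
      have h1 : 1 ≤ t j := (Finset.mem_Icc.mp hmem.1).1
      have h2 : t j < t k := htmono j k hj hk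
      exact Finset.mem_Icc.mpr ⟨h1, Nat.le_sub_one_of_lt h2⟩
    have hsum_eq : ∑ j ∈ Finset.range k, A (t j) =
        ∑ s ∈ Finset.image t (Finset.range k), A s :=
      (Finset.sum_image (fun a ha b hb hab => hinj ha hb hab)).symm
    have hΛeq : Λ (t k) = W k +
        ∑ s ∈ Finset.Icc 1 (t k - 1) \ Finset.image t (Finset.range k), A s := by
      rw [hΛ, hW]
      simp only []
      rw [add_assoc]
      congr 1
      rw [hsum_eq, add_comm, Finset.sum_sdiff himg]
    rw [hΛeq]
    simp only [add_sub_cancel_left]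
    exact hsum_psd _
  -- quadratic form bound at W k
  have hLk : ∀ k, k < n →
      L ≤ ∑ a ∈ S (t k), z (t k) a ⬝ᵥ (W k)⁻¹ *ᵥ z (t k) a := by
    intro k hk
    have hmem := (hT₀ (t k)).mp (htmem k hk)
    refine le_trans hmem.2 (Finset.sum_le_sum (fun a _ => ?_))
    exact inv_quad_mono (hWpd k) (hΛpd (t k)) (hWsub k hk) _
  -- determinant growth
  have hgrow : ∀ k, k < n → (W k).det * (1 + L) ≤ (W (k + 1)).det := by
    intro k hk
    have hWk1 : W (k + 1) = W k + A (t k) := by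
      rw [hW]
      simp only []
      rw [Finset.sum_range_succ, add_assoc]
    have htr : ((W k)⁻¹ * A (t k)).trace =
        ∑ a ∈ S (t k), z (t k) a ⬝ᵥ (W k)⁻¹ *ᵥ z (t k) a := by
      rw [hA]
      simp only []
      rw [Finset.mul_sum, Matrix.trace_sum]
      exact Finset.sum_congr rfl (fun a _ => trace_inv_vecMulVec _ _)
    have h1 : (W k).det * (1 + L) ≤ (W k).det * (1 + ((W k)⁻¹ * A (t k)).trace) := by
      apply mul_le_mul_of_nonneg_left _ (hWpd k).det_pos.le
      rw [htr]
      linarith [hLk k hk]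
    rw [hWk1]
    exact le_trans h1 (det_add_psd_lower (hWpd k) (hApsd _))
  -- induction
  have hdetlow : ∀ k, k ≤ n → lam ^ d * (1 + L) ^ k ≤ (W k).det := by
    intro k
    induction k with
    | zero =>
      intro _
      have : W 0 = lam • (1 : Matrix (Fin d) (Fin d) ℝ) := by
        rw [hW]; simp
      rw [this, pow_zero, mul_one, Matrix.det_smul, Matrix.det_one, mul_one]
      simp
    | succ k ih =>
      intro hk1
      have hk : k < n := Nat.lt_of_succ_le hk1
      have h1 := ih hk.le
      calc lam ^ d * (1 + L) ^ (k + 1) = (lam ^ d * (1 + L) ^ k) * (1 + L) := by ring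
        _ ≤ (W k).det * (1 + L) := by
            apply mul_le_mul_of_nonneg_right h1 (by linarith)
        _ ≤ (W (k + 1)).det := hgrow k hk
  -- trace bound
  have htrA : ∀ s, (A s).trace ≤ K * X ^ 2 := by
    intro s
    rw [hA]
    simp only []
    rw [Matrix.trace_sum]
    calc ∑ a ∈ S s, (vecMulVec (z s a) (z s a)).trace
        = ∑ a ∈ S s, z s a ⬝ᵥ z s a := Finset.sum_congr rfl (fun a _ => trace_vecMulVec _)
      _ ≤ ∑ a ∈ S s, X ^ 2 := Finset.sum_le_sum (fun a ha => hzz s a ha)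
      _ = (S s).card * X ^ 2 := by rw [Finset.sum_const, nsmul_eq_mul]
      _ ≤ K * X ^ 2 := by
          apply mul_le_mul_of_nonneg_right _ hX2
          exact_mod_cast hK s
  have htrW : (W n).trace ≤ lam * d + n * (K * X ^ 2) := by
    rw [hW]
    simp only []
    rw [Matrix.trace_add, Matrix.trace_smul, Matrix.trace_one, Matrix.trace_sum]
    have : ∑ j ∈ Finset.range n, (A (t j)).trace ≤ ∑ j ∈ Finset.range n, K * X ^ 2 :=
      Finset.sum_le_sum (fun j _ => htrA _)
    rw [Finset.sum_const, Finset.card_range, nsmul_eq_mul] at this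
    simp only [smul_eq_mul, Fintype.card_fin] at *
    linarith
  -- c > 0
  set c : ℝ := K * X ^ 2 / lam with hc
  have hc0 : 0 ≤ c := by positivity
  have hLc : L ≤ c := by
    have h0 := hLk 0 hnpos
    have hW0 : W 0 = lam • (1 : Matrix (Fin d) (Fin d) ℝ) := by rw [hW]; simp
    rw [hW0, inv_smul_one hlam] at h0
    have heval : ∀ a ∈ S (t 0), z (t 0) a ⬝ᵥ (lam⁻¹ • (1 : Matrix (Fin d) (Fin d) ℝ))
        *ᵥ z (t 0) a = lam⁻¹ * (z (t 0) a ⬝ᵥ z (t 0) a) := by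
      intro a _
      rw [Matrix.smul_mulVec, Matrix.one_mulVec, dotProduct_smul, smul_eq_mul]
    calc L ≤ ∑ a ∈ S (t 0), z (t 0) a ⬝ᵥ (lam⁻¹ • (1 : Matrix (Fin d) (Fin d) ℝ))
          *ᵥ z (t 0) a := h0
      _ = ∑ a ∈ S (t 0), lam⁻¹ * (z (t 0) a ⬝ᵥ z (t 0) a) := Finset.sum_congr rfl heval
      _ ≤ ∑ a ∈ S (t 0), lam⁻¹ * X ^ 2 :=
          Finset.sum_le_sum (fun a ha => mul_le_mul_of_nonneg_left (hzz _ a ha)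
            (by positivity))
      _ = (S (t 0)).card * (lam⁻¹ * X ^ 2) := by rw [Finset.sum_const, nsmul_eq_mul]
      _ ≤ K * (lam⁻¹ * X ^ 2) := by
          apply mul_le_mul_of_nonneg_right _ (by positivity)
          exact_mod_cast hK (t 0)
      _ = c := by rw [hc]; field_simp
  have hcpos : 0 < c := lt_of_lt_of_le hL hLc
  -- combine det bounds
  have hmain : (n : ℝ) * Real.log (1 + L) ≤ d * Real.log (1 + n * c / d) := by
    have h1 : lam ^ d * (1 + L) ^ n ≤ ((W n).trace / d) ^ d :=
      le_trans (hdetlow n le_rfl) (det_le_trace_pow hd (hWpd n))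
    have hdpos : (0 : ℝ) < d := by exact_mod_cast hd
    have htr0 : 0 ≤ (W n).trace := psd_trace_nonneg (hWpd n).posSemidef
    have h2 : ((W n).trace / d) ^ d ≤ ((lam * d + n * (K * X ^ 2)) / d) ^ d := by
      apply pow_le_pow_left₀ (by positivity)
      gcongr
    have heq : (lam * d + ↑n * (K * X ^ 2)) / d = lam * (1 + n * c / d) := by
      rw [hc]; field_simp
    have h3 : lam ^ d * (1 + L) ^ n ≤ lam ^ d * (1 + n * c / d) ^ d := by
      rw [heq, mul_pow] at h2
      exact le_trans h1 (le_trans h2 (le_of_eq rfl))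
    have h4 : (1 + L) ^ n ≤ (1 + (n : ℝ) * c / d) ^ d := by
      have hlamd : (0:ℝ) < lam ^ d := by positivity
      exact le_of_mul_le_mul_left h3 hlamd
    have h5 : Real.log ((1 + L) ^ n) ≤ Real.log ((1 + (n:ℝ) * c / d) ^ d) :=
      Real.log_le_log (by positivity) h4
    rw [Real.log_pow, Real.log_pow] at h5
    exact_mod_cast h5
  -- final scalar step
  have hdpos : (0 : ℝ) < d := by exact_mod_cast hd
  have := scalar_final hdpos hL1 hcpos (Nat.cast_nonneg n : (0:ℝ) ≤ (n:ℝ)) hmain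
  have hceq : c / Real.log (1 + L) = X ^ 2 * K / (Real.log (1 + L) * lam) := by
    rw [hc]; field_simp
  rw [hceq] at this
  exact this
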